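/- arXiv:cs/0412015 — 2 statements merged into one kernel-verified Lean document; each statement's English description precedes it below -/
import Mathlib

section
/- The relative-frequency estimate p̃ is a maximum-likelihood estimate of a probability model M on f if and only if p̃ ∈ M; and in that case it is the unique maximum-likelihood estimate of M on f. -/
private lemma mle_main {X : Type*}
    (f : X → ℝ) (s : Finset X) (hsupp : ∀ x ∉ s, f x = 0)
    (hf : ∀ x, 0 ≤ f x) (hpos : 0 < ∑ y ∈ s, f y)
    (p : X → ℝ) (hp0 : ∀ x, 0 ≤ p x) (hps : Summable p) (hp1 : ∑' x, p x = 1) :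
    ∏ x ∈ s, p x ^ f x ≤ ∏ x ∈ s, (f x / ∑ y ∈ s, f y) ^ f x ∧
    ((∏ x ∈ s, p x ^ f x = ∏ x ∈ s, (f x / ∑ y ∈ s, f y) ^ f x) →
      ∀ x, p x = f x / ∑ y ∈ s, f y) := by
  classical
  set N := ∑ y ∈ s, f y with hNdef
  set t := s.filter (fun x => f x ≠ 0) with htdef
  have htpos : ∀ x ∈ t, 0 < f x := by
    intro x hx
    rcases Finset.mem_filter.mp hx with ⟨_, h0⟩
    exact lt_of_le_of_ne (hf x) (Ne.symm h0)
  have hw0 : ∀ x, x ∉ t → f x = 0 := by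
    intro x hx
    by_contra h0
    have hxs : x ∈ s := by
      by_contra hxs; exact h0 (hsupp x hxs)
    exact hx (Finset.mem_filter.mpr ⟨hxs, h0⟩)
  have hsum_t : ∑ x ∈ t, f x = N := Finset.sum_filter_ne_zero s
  have hprod : ∀ q : X → ℝ, ∏ x ∈ s, q x ^ f x = ∏ x ∈ t, q x ^ f x := by
    intro q
    refine (Finset.prod_subset (Finset.filter_subset _ _) ?_).symm
    intro x _ hxt
    rw [hw0 x hxt, Real.rpow_zero]
  have hwpos : ∀ x ∈ t, 0 < f x / N := fun x hx => div_pos (htpos x hx) hpos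
  have hsumpt : ∑ x ∈ t, p x ≤ 1 := by
    rw [← hp1]; exact Summable.sum_le_tsum t (fun i _ => hp0 i) hps
  by_cases hz : ∃ x ∈ t, p x = 0
  · obtain ⟨x0, hx0, hpx0⟩ := hz
    have h1 : ∏ x ∈ t, p x ^ f x = 0 :=
      Finset.prod_eq_zero hx0 (by rw [hpx0]; exact Real.zero_rpow (ne_of_gt (htpos x0 hx0)))
    have h2 : 0 < ∏ x ∈ t, (f x / N) ^ f x :=
      Finset.prod_pos fun x hx => Real.rpow_pos_of_pos (hwpos x hx) _
    constructor
    · rw [hprod p, hprod, h1]; exact le_of_lt h2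
    · intro heq
      rw [hprod p, hprod, h1] at heq
      exact absurd heq.symm (ne_of_gt h2)
  · push_neg at hz
    have hppos : ∀ x ∈ t, 0 < p x := fun x hx => lt_of_le_of_ne (hp0 x) (Ne.symm (hz x hx))
    have hA : ∏ x ∈ t, p x ^ f x = Real.exp (∑ x ∈ t, Real.log (p x) * f x) := by
      rw [Real.exp_sum]
      exact Finset.prod_congr rfl fun x hx => Real.rpow_def_of_pos (hppos x hx) _
    have hB : ∏ x ∈ t, (f x / N) ^ f x = Real.exp (∑ x ∈ t, Real.log (f x / N) * f x) := by
      rw [Real.exp_sum]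
      exact Finset.prod_congr rfl fun x hx => Real.rpow_def_of_pos (hwpos x hx) _
    have hterm : ∀ x ∈ t, Real.log (p x) * f x - Real.log (f x / N) * f x ≤ N * p x - f x := by
      intro x hx
      have hr : 0 < p x / (f x / N) := div_pos (hppos x hx) (hwpos x hx)
      have hlog := Real.log_le_sub_one_of_pos hr
      rw [Real.log_div (ne_of_gt (hppos x hx)) (ne_of_gt (hwpos x hx))] at hlog
      have hfx := htpos x hx
      have hdiv : p x / (f x / N) = N * p x / f x := by
        field_simp
      rw [hdiv] at hlog
      have := mul_le_mul_of_nonneg_right hlog (le_of_lt hfx)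
      calc Real.log (p x) * f x - Real.log (f x / N) * f x
          = (Real.log (p x) - Real.log (f x / N)) * f x := by ring
        _ ≤ (N * p x / f x - 1) * f x := this
        _ = N * p x - f x := by field_simp
    have h4 : ∑ x ∈ t, (N * p x - f x) ≤ 0 := by
      rw [Finset.sum_sub_distrib, ← Finset.mul_sum, hsum_t]
      nlinarith [hsumpt, hpos]
    have h3 : ∑ x ∈ t, Real.log (p x) * f x - ∑ x ∈ t, Real.log (f x / N) * f x
        ≤ ∑ x ∈ t, (N * p x - f x) := by
      rw [← Finset.sum_sub_distrib]
      exact Finset.sum_le_sum hterm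
    constructor
    · rw [hprod p, hprod, hA, hB]
      exact Real.exp_le_exp.mpr (by linarith)
    · intro heq
      rw [hprod p, hprod, hA, hB] at heq
      have h6 : ∑ x ∈ t, Real.log (p x) * f x = ∑ x ∈ t, Real.log (f x / N) * f x :=
        Real.exp_injective heq
      have h7 : ∑ x ∈ t, (N * p x - f x - (Real.log (p x) * f x - Real.log (f x / N) * f x)) = 0 := by
        have hle : ∑ x ∈ t, (N * p x - f x - (Real.log (p x) * f x - Real.log (f x / N) * f x)) ≤ 0 := by
          simp only [Finset.sum_sub_distrib] at h4 ⊢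
          linarith
        have hge : 0 ≤ ∑ x ∈ t, (N * p x - f x - (Real.log (p x) * f x - Real.log (f x / N) * f x)) :=
          Finset.sum_nonneg fun x hx => by linarith [hterm x hx]
        linarith
      have heach := (Finset.sum_eq_zero_iff_of_nonneg
        (fun x hx => by linarith [hterm x hx])).mp h7
      have hpt : ∀ x ∈ t, p x = f x / N := by
        intro x hx
        have hx0 := heach x hx
        have hr : 0 < p x / (f x / N) := div_pos (hppos x hx) (hwpos x hx)
        by_contra hne
        have hr1 : p x / (f x / N) ≠ 1 := by
          intro h1
          exact hne ((div_eq_one_iff_eq (ne_of_gt (hwpos x hx))).mp h1)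
        have hlog := Real.log_lt_sub_one_of_pos hr hr1
        rw [Real.log_div (ne_of_gt (hppos x hx)) (ne_of_gt (hwpos x hx))] at hlog
        have hfx := htpos x hx
        have hdiv : p x / (f x / N) = N * p x / f x := by field_simp
        rw [hdiv] at hlog
        have hmul := mul_lt_mul_of_pos_right hlog hfx
        have : (N * p x / f x - 1) * f x = N * p x - f x := by field_simp
        nlinarith [hmul]
      have hsum1 : ∑ x ∈ t, p x = 1 := by
        rw [Finset.sum_congr rfl hpt, ← Finset.sum_div, hsum_t]
        field_simp
      intro x
      by_cases hx : x ∈ t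
      · exact hpt x hx
      · have hwx : f x / N = 0 := by rw [hw0 x hx]; simp
        rw [hwx]
        have hle : ∑ y ∈ insert x t, p y ≤ 1 := by
          rw [← hp1]; exact Summable.sum_le_tsum _ (fun i _ => hp0 i) hps
        rw [Finset.sum_insert hx, hsum1] at hle
        linarith [hp0 x]

/-- The relative-frequency estimate `p̃` is a maximum-likelihood estimate of a
probability model `M` on `f` if and only if `p̃ ∈ M`; and in that case it is
the unique maximum-likelihood estimate of `M` on `f`. -/
theorem stmt_8 {X : Type*} [Countable X]
    (f : X → ℝ) (s : Finset X) (hsupp : ∀ x ∉ s, f x = 0)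
    (hf : ∀ x, 0 ≤ f x) (hpos : 0 < ∑ x ∈ s, f x)
    (M : Set (X → ℝ)) (hMne : M.Nonempty)
    (hM : ∀ p ∈ M, (∀ x, 0 ≤ p x) ∧ Summable p ∧ (∑' x, p x = 1)) :
    (((fun x => f x / ∑ y ∈ s, f y) ∈ M ∧
        ∀ p ∈ M, ∏ x ∈ s, p x ^ f x ≤
          ∏ x ∈ s, (f x / ∑ y ∈ s, f y) ^ f x) ↔
      (fun x => f x / ∑ y ∈ s, f y) ∈ M) ∧
    ((fun x => f x / ∑ y ∈ s, f y) ∈ M →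
      ∀ p ∈ M,
        (∏ x ∈ s, p x ^ f x = ∏ x ∈ s, (f x / ∑ y ∈ s, f y) ^ f x) →
          p = fun x => f x / ∑ y ∈ s, f y) := by
  constructor
  · constructor
    · exact fun h => h.1
    · intro hm
      refine ⟨hm, fun p hp => ?_⟩
      obtain ⟨h0, h1, h2⟩ := hM p hp
      exact (mle_main f s hsupp hf hpos p h0 h1 h2).1
  · intro _ p hp heq
    obtain ⟨h0, h1, h2⟩ := hM p hp
    funext x
    exact (mle_main f s hsupp hf hpos p h0 h1 h2).2 heq x
end

section
/- GEM monotonicity: if p̂ satisfies L(f_q; p̂) ≥ L(f_q; q) (the generalized M-step condition), then the incomplete-data corpus probability does not decrease: L(f; p̂) ≥ L(f; q). -/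
open Real

/-- Gibbs' inequality (cross-entropy inequality) for countable sums. -/
private lemma gibbs_aux {Z : Type*} (w v : Z → ℝ) (hw : ∀ z, 0 < w z) (hv : ∀ z, 0 < v z)
    (hws : Summable w) (hvs : Summable v) (hw1 : ∑' z, w z = 1) (hv1 : ∑' z, v z = 1)
    (h1 : Summable (fun z => w z * Real.log (w z)))
    (h2 : Summable (fun z => w z * Real.log (v z))) :
    ∑' z, w z * Real.log (v z) ≤ ∑' z, w z * Real.log (w z) := by
  have hsub : Summable (fun z => w z * Real.log (v z) - w z * Real.log (w z)) := h2.sub h1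
  have key : ∑' z, (w z * Real.log (v z) - w z * Real.log (w z)) ≤ ∑' z, (v z - w z) := by
    refine Summable.tsum_le_tsum (fun z => ?_) hsub (hvs.sub hws)
    have h := Real.log_le_sub_one_of_pos (div_pos (hv z) (hw z))
    have h' := mul_le_mul_of_nonneg_left h (hw z).le
    rw [Real.log_div (hv z).ne' (hw z).ne'] at h'
    have hwz := (hw z).ne'
    calc w z * Real.log (v z) - w z * Real.log (w z)
        = w z * (Real.log (v z) - Real.log (w z)) := by ring
      _ ≤ w z * (v z / w z - 1) := h'
      _ = v z - w z := by field_simp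
  rw [Summable.tsum_sub h2 h1, Summable.tsum_sub hvs hws, hw1, hv1] at key
  linarith

/-- The expected complete-data log-likelihood decomposition:
the tprod equals the exponential of a finite sum over analyses. -/
private lemma tprod_aux {X Y : Type*} (A : Y → Set X) (yield : X → Y)
    (hfib : ∀ x y, x ∈ A y ↔ yield x = y)
    (f : Y → ℝ) (sY' : Finset Y) (hsupp' : ∀ y ∉ sY', f y = 0)
    (q p : X → ℝ) (hqs : Summable q)
    (hQpos : ∀ y ∈ sY', 0 < ∑' x' : A y, q x')
    (hPpos : ∀ y ∈ sY', 0 < ∑' x' : A y, p x')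
    (hppos : ∀ y ∈ sY', ∀ x ∈ A y, 0 < p x)
    (hH : ∀ y ∈ sY', Summable (fun x : A y =>
      (q x / ∑' x' : A y, q x') * Real.log (p x / ∑' x' : A y, p x'))) :
    (∏' x, p x ^ (f (yield x) * (q x / ∑' x' : A (yield x), q x')))
      = Real.exp (∑ y ∈ sY', f y *
          ((∑' x : A y, (q x / ∑' x' : A y, q x') * Real.log (p x / ∑' x' : A y, p x'))
            + Real.log (∑' x : A y, p x))) := by
  classical
  set Q : Y → ℝ := fun y => ∑' x' : A y, q x' with hQdef
  set P : Y → ℝ := fun y => ∑' x' : A y, p x' with hPdef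
  set h : X → ℝ := fun x => f (yield x) * (q x / Q (yield x)) * Real.log (p x) with hhdef
  -- pointwise: factors are exponentials
  have hpt : ∀ x, p x ^ (f (yield x) * (q x / Q (yield x))) = Real.exp (h x) := by
    intro x
    by_cases hfx : f (yield x) = 0
    · simp [hhdef, hfx]
    · have hy : yield x ∈ sY' := by by_contra hc; exact hfx (hsupp' _ hc)
      have hpx : 0 < p x := hppos _ hy x ((hfib x (yield x)).mpr rfl)
      rw [Real.rpow_def_of_pos hpx]
      congr 1
      simp only [hhdef]; ring
  -- rewriting h on each fiber
  have hfy : ∀ y ∈ sY', ∀ x : A y,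
      h x = f y * ((q x / Q y) * Real.log (p x / P y))
              + (f y * Real.log (P y) / Q y) * q x := by
    intro y hy x
    have hyx : yield (x : X) = y := (hfib x y).mp x.2
    have hpx : 0 < p x := hppos _ hy x x.2
    have hPy : 0 < P y := hPpos y hy
    have hQy : 0 < Q y := hQpos y hy
    have hlog : Real.log (p x / P y) = Real.log (p x) - Real.log (P y) :=
      Real.log_div hpx.ne' hPy.ne'
    simp only [hhdef, hyx]
    rw [hlog]
    field_simp
    ring
  -- summability on each fiber
  have hwsum : ∀ y : Y, Summable (fun x : A y => q x) := fun y => hqs.subtype _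
  have hsf : ∀ y ∈ sY', Summable (fun x : A y => h x) := by
    intro y hy
    refine Summable.congr ?_ (fun x => (hfy y hy x).symm)
    exact (((hH y hy).mul_left (f y)).add ((hwsum y).mul_left _))
  -- indicator decomposition
  have hdec : ∀ x, h x = ∑ y ∈ sY', Set.indicator (A y) h x := by
    intro x
    rw [Finset.sum_eq_single (yield x)]
    · exact (Set.indicator_of_mem ((hfib x _).mpr rfl) h).symm
    · intro y _ hne
      exact Set.indicator_of_notMem (fun hm => hne ((hfib x y).mp hm).symm) h
    · intro hy
      rw [Set.indicator_of_mem ((hfib x _).mpr rfl)]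
      simp [hhdef, hsupp' _ hy]
  have hsind : ∀ y ∈ sY', Summable (Set.indicator (A y) h) := by
    intro y hy
    exact summable_subtype_iff_indicator.mp (hsf y hy)
  -- summability of h
  have hsh : Summable h := by
    refine Summable.congr ?_ (fun x => (hdec x).symm)
    exact summable_sum (fun y hy => hsind y hy)
  -- tsum of h
  have htsum : ∑' x, h x = ∑ y ∈ sY', f y *
      ((∑' x : A y, (q x / Q y) * Real.log (p x / P y)) + Real.log (P y)) := by
    rw [tsum_congr hdec, Summable.tsum_finsetSum (fun y hy => hsind y hy)]
    refine Finset.sum_congr rfl (fun y hy => ?_)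
    have hQy : 0 < Q y := hQpos y hy
    rw [← tsum_subtype (A y) h]
    rw [tsum_congr (fun x => hfy y hy x)]
    rw [Summable.tsum_add ((hH y hy).mul_left (f y)) ((hwsum y).mul_left _),
      tsum_mul_left, tsum_mul_left]
    have : (∑' x : A y, q x) = Q y := rfl
    rw [this, div_mul_cancel₀ _ hQy.ne']
    ring
  -- conclude
  calc (∏' x, p x ^ (f (yield x) * (q x / Q (yield x))))
      = ∏' x, Real.exp (h x) := tprod_congr hpt
    _ = Real.exp (∑' x, h x) := (hsh.hasSum.rexp).tprod_eq
    _ = _ := by rw [htsum]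

/-- GEM monotonicity: if `p̂` satisfies `L(f_q; p̂) ≥ L(f_q; q)` (the
generalized M-step condition), then the incomplete-data corpus probability
does not decrease: `L(f; p̂) ≥ L(f; q)`. -/
theorem stmt_12 {X Y : Type*} [Countable X] [Countable Y]
    (A : Y → Set X) (yield : X → Y)
    (hyield : ∀ x, x ∈ A (yield x))
    (hdisj : ∀ y₁ y₂, y₁ ≠ y₂ → Disjoint (A y₁) (A y₂))
    (f : Y → ℝ) (sY : Finset Y) (hsupp : ∀ y ∉ sY, f y = 0)
    (hf : ∀ y, 0 ≤ f y) (hFpos : 0 < ∑ y ∈ sY, f y)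
    (q phat : X → ℝ)
    (hq0 : ∀ x, 0 ≤ q x) (hphat0 : ∀ x, 0 ≤ phat x)
    (hqs : Summable q) (hphats : Summable phat)
    (hq1 : ∑' x, q x = 1) (hphat1 : ∑' x, phat x = 1)
    (hqpos : ∀ y, 0 < f y → ∀ x ∈ A y, 0 < q x)
    (hphatpos : ∀ y, 0 < f y → ∀ x ∈ A y, 0 < phat x)
    (hmulq : Multipliable (fun x =>
      q x ^ (f (yield x) * (q x / ∑' x' : A (yield x), q x'))))
    (hmulp : Multipliable (fun x =>
      phat x ^ (f (yield x) * (q x / ∑' x' : A (yield x), q x'))))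
    (hHsumq : ∀ y : Y, Summable (fun x : A y =>
      (q x / ∑' x' : A y, q x') * Real.log (q x / ∑' x' : A y, q x')))
    (hHsump : ∀ y : Y, Summable (fun x : A y =>
      (q x / ∑' x' : A y, q x') * Real.log (phat x / ∑' x' : A y, phat x')))
    (hMstep :
      (∏' x, q x ^ (f (yield x) * (q x / ∑' x' : A (yield x), q x')))
        ≤ ∏' x, phat x ^ (f (yield x) * (q x / ∑' x' : A (yield x), q x'))) :
    ∏ y ∈ sY, (∑' x : A y, q x) ^ f y
      ≤ ∏ y ∈ sY, (∑' x : A y, phat x) ^ f y := by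
  classical
  -- the analyses are exactly the fibers of yield
  have hfib : ∀ x y, x ∈ A y ↔ yield x = y := by
    intro x y
    constructor
    · intro hx
      by_contra hne
      exact Set.disjoint_left.mp (hdisj _ _ hne) (hyield x) hx
    · rintro rfl; exact hyield x
  set Q : Y → ℝ := fun y => ∑' x' : A y, q x' with hQdef
  set P : Y → ℝ := fun y => ∑' x' : A y, phat x' with hPdef
  by_cases hQall : ∀ y ∈ sY, f y ≠ 0 → 0 < Q y
  · -- main case
    set sY' : Finset Y := sY.filter (fun y => f y ≠ 0) with hsY'
    have hmem : ∀ y ∈ sY', y ∈ sY ∧ f y ≠ 0 := by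
      intro y hy; simpa [hsY', Finset.mem_filter] using hy
    have hfpos : ∀ y ∈ sY', 0 < f y := fun y hy => lt_of_le_of_ne (hf y) (Ne.symm (hmem y hy).2)
    have hsupp' : ∀ y ∉ sY', f y = 0 := by
      intro y hy
      by_cases h1 : y ∈ sY
      · by_contra h2
        exact hy (Finset.mem_filter.mpr ⟨h1, h2⟩)
      · exact hsupp y h1
    have hQpos' : ∀ y ∈ sY', 0 < Q y := fun y hy => hQall y (hmem y hy).1 (hmem y hy).2
    have hqpos' : ∀ y ∈ sY', ∀ x ∈ A y, 0 < q x := fun y hy => hqpos y (hfpos y hy)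
    have hppos' : ∀ y ∈ sY', ∀ x ∈ A y, 0 < phat x := fun y hy => hphatpos y (hfpos y hy)
    have hPpos' : ∀ y ∈ sY', 0 < P y := by
      intro y hy
      have hQy := hQpos' y hy
      have hne : (A y).Nonempty := by
        by_contra hc
        rw [Set.not_nonempty_iff_eq_empty] at hc
        have : Q y = 0 := by
          have : IsEmpty ↥(A y) := by rw [hc]; infer_instance
          simp only [hQdef]
          exact tsum_empty
        rw [this] at hQy; exact lt_irrefl _ hQy
      obtain ⟨x0, hx0⟩ := hne
      have h1 : 0 < phat x0 := hppos' y hy x0 hx0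
      have h2 : phat x0 ≤ P y :=
        Summable.le_tsum (hphats.subtype (A y)) ⟨x0, hx0⟩ (fun j _ => hphat0 _)
      linarith
    -- apply the tprod decomposition
    have eq_q := tprod_aux A yield hfib f sY' hsupp' q q hqs hQpos' hQpos' hqpos'
      (fun y _ => hHsumq y)
    have eq_p := tprod_aux A yield hfib f sY' hsupp' q phat hqs hQpos' hPpos' hppos'
      (fun y _ => hHsump y)
    rw [eq_q, eq_p, Real.exp_le_exp] at hMstep
    -- Gibbs' inequality per analysis
    have hgibbs : ∀ y ∈ sY',
        (∑' x : A y, (q x / Q y) * Real.log (phat x / P y))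
          ≤ ∑' x : A y, (q x / Q y) * Real.log (q x / Q y) := by
      intro y hy
      have hQy := hQpos' y hy
      have hPy := hPpos' y hy
      refine gibbs_aux (fun x : A y => q x / Q y) (fun x : A y => phat x / P y)
        (fun x => div_pos (hqpos' y hy x x.2) hQy)
        (fun x => div_pos (hppos' y hy x x.2) hPy)
        ((hqs.subtype _).div_const _) ((hphats.subtype _).div_const _)
        ?_ ?_ (hHsumq y) (hHsump y)
      · rw [tsum_div_const]; exact div_self hQy.ne'
      · rw [tsum_div_const]; exact div_self hPy.ne'
    -- reduce products over sY to products over sY'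
    have hprodq : ∏ y ∈ sY, Q y ^ f y = ∏ y ∈ sY', Q y ^ f y := by
      refine (Finset.prod_filter_of_ne ?_).symm
      intro y _ hne
      intro h0
      exact hne (by rw [h0, Real.rpow_zero])
    have hprodp : ∏ y ∈ sY, P y ^ f y = ∏ y ∈ sY', P y ^ f y := by
      refine (Finset.prod_filter_of_ne ?_).symm
      intro y _ hne
      intro h0
      exact hne (by rw [h0, Real.rpow_zero])
    -- rewrite products as exponentials
    have hexpq : ∏ y ∈ sY', Q y ^ f y = Real.exp (∑ y ∈ sY', f y * Real.log (Q y)) := by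
      rw [Real.exp_sum]
      refine Finset.prod_congr rfl (fun y hy => ?_)
      rw [Real.rpow_def_of_pos (hQpos' y hy), mul_comm]
    have hexpp : ∏ y ∈ sY', P y ^ f y = Real.exp (∑ y ∈ sY', f y * Real.log (P y)) := by
      rw [Real.exp_sum]
      refine Finset.prod_congr rfl (fun y hy => ?_)
      rw [Real.rpow_def_of_pos (hPpos' y hy), mul_comm]
    rw [hprodq, hprodp, hexpq, hexpp, Real.exp_le_exp]
    -- final arithmetic
    have hsplit_q : ∑ y ∈ sY', f y *
        ((∑' x : A y, (q x / Q y) * Real.log (q x / Q y)) + Real.log (Q y))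
        = (∑ y ∈ sY', f y * (∑' x : A y, (q x / Q y) * Real.log (q x / Q y)))
          + ∑ y ∈ sY', f y * Real.log (Q y) := by
      rw [← Finset.sum_add_distrib]
      exact Finset.sum_congr rfl (fun y _ => by ring)
    have hsplit_p : ∑ y ∈ sY', f y *
        ((∑' x : A y, (q x / Q y) * Real.log (phat x / P y)) + Real.log (P y))
        = (∑ y ∈ sY', f y * (∑' x : A y, (q x / Q y) * Real.log (phat x / P y)))
          + ∑ y ∈ sY', f y * Real.log (P y) := by
      rw [← Finset.sum_add_distrib]
      exact Finset.sum_congr rfl (fun y _ => by ring)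
    rw [hsplit_q, hsplit_p] at hMstep
    have hHle : ∑ y ∈ sY', f y * (∑' x : A y, (q x / Q y) * Real.log (phat x / P y))
        ≤ ∑ y ∈ sY', f y * (∑' x : A y, (q x / Q y) * Real.log (q x / Q y)) :=
      Finset.sum_le_sum (fun y hy =>
        mul_le_mul_of_nonneg_left (hgibbs y hy) (hf y))
    linarith
  · -- degenerate case: some analysis has zero probability, LHS is 0
    push_neg at hQall
    obtain ⟨y0, hy0, hfy0, hQy0⟩ := hQall
    have hQ0 : Q y0 = 0 :=
      le_antisymm hQy0 (tsum_nonneg (fun x => hq0 x))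
    have hlhs : ∏ y ∈ sY, Q y ^ f y = 0 := by
      refine Finset.prod_eq_zero hy0 ?_
      rw [hQ0]
      exact Real.zero_rpow hfy0
    rw [hlhs]
    exact Finset.prod_nonneg (fun y _ => Real.rpow_nonneg (tsum_nonneg (fun x : A y => hphat0 x)) _)
end
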